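/- There exists a universal constant δ > 0 such that for every n and every 3-CNF formula φ in n Boolean variables with |sat(φ)| ≥ 7^{n/3}, the set sat(φ) contains a projection of dimension at least δ·n. -/

import Mathlib

/-- A literal is a pair (variable, required value); an assignment `x` satisfies a
clause (a finite set of literals, interpreted as their disjunction) if some literal
of the clause gets its required value. -/
def ClauseSat {n : ℕ} (C : Finset (Fin n × ZMod 2)) (x : Fin n → ZMod 2) : Prop :=
  ∃ l ∈ C, x l.1 = l.2

/-- The set of satisfying assignments of a CNF formula (a finite list of clauses,
interpreted as their conjunction). -/
def SatAssignments {n : ℕ} (φ : List (Finset (Fin n × ZMod 2))) :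
    Set (Fin n → ZMod 2) :=
  {x | ∀ C ∈ φ, ClauseSat C x}

/-- A `k`-CNF formula: every clause has at most `k` literals. -/
def IsKCnf {n : ℕ} (k : ℕ) (φ : List (Finset (Fin n × ZMod 2))) : Prop :=
  ∀ C ∈ φ, C.card ≤ k

/-- `P` is a projection of dimension `δ` in `{0,1}^n`. -/
def IsProjection {n : ℕ} (δ : ℕ) (P : Set (Fin n → ZMod 2)) : Prop :=
  ∃ A B : Fin (δ + 1) → Finset (Fin n),
    (∀ i, Disjoint (A i) (B i)) ∧
    (∀ i j, i ≠ j → Disjoint (A i ∪ B i) (A j ∪ B j)) ∧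
    (Finset.univ.biUnion fun i => A i ∪ B i) = Finset.univ ∧
    (∀ i, i ≠ 0 → (A i ∪ B i).Nonempty) ∧
    P = {x | (∀ j ∈ A 0, x j = 0) ∧ (∀ j ∈ B 0, x j = 1) ∧
      ∀ i, i ≠ 0 → ∃ b : ZMod 2,
        (∀ j ∈ A i, x j = b) ∧ (∀ j ∈ B i, x j = 1 - b)}

namespace Stmt13

lemma z01 : ∀ a : ZMod 2, a = 0 ∨ a = 1 := by decide
lemma zsplit : ∀ a b : ZMod 2, a = b ∨ a = b + 1 := by decide
lemma zne : ∀ b : ZMod 2, ¬ b + 1 = b := by decide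
lemma ztwo : ∀ a b : ZMod 2, ¬ a = b → (a = 0 ∧ b = 1) ∨ (a = 1 ∧ b = 0) := by decide

/-- extensions of a partial assignment -/
def Ext {n : ℕ} (ρ : Fin n → Option (ZMod 2)) : Set (Fin n → ZMod 2) :=
  {x | ∀ v b, ρ v = some b → x v = b}

def SatP {n : ℕ} (φ : List (Finset (Fin n × ZMod 2))) (ρ : Fin n → Option (ZMod 2)) :
    Set (Fin n → ZMod 2) :=
  SatAssignments φ ∩ Ext ρ

def FreeS {n : ℕ} (ρ : Fin n → Option (ZMod 2)) : Finset (Fin n) :=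
  Finset.univ.filter fun v => ρ v = none

noncomputable def K (j : ℕ) : ℝ := (8/7) * (1 - (8/15)^j)

lemma K_zero : K 0 = 0 := by norm_num [K]

lemma K_succ (j : ℕ) : K (j+1) = (1 + K j) * (8/15) := by
  simp only [K, pow_succ]; ring

lemma K_nonneg (j : ℕ) : 0 ≤ K j := by
  have h : (8/15:ℝ)^j ≤ 1 := pow_le_one₀ (by norm_num) (by norm_num)
  simp only [K]; nlinarith

lemma K_le_one : ∀ j, j ≤ 3 → K j ≤ 1 := by
  intro j hj
  interval_cases j <;> norm_num [K]

lemma sub_update {n : ℕ} (φ : List (Finset (Fin n × ZMod 2))) (ρ : Fin n → Option (ZMod 2))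
    (v : Fin n) (hv : ρ v = none) (b : ZMod 2) :
    SatP φ (Function.update ρ v (some b)) ⊆ SatP φ ρ := by
  rintro x ⟨hs, he⟩
  refine ⟨hs, fun w c hw => ?_⟩
  have hwv : w ≠ v := by rintro rfl; rw [hv] at hw; exact nomatch hw
  exact he w c (by rwa [Function.update_of_ne hwv])

lemma split_update {n : ℕ} (φ : List (Finset (Fin n × ZMod 2))) (ρ : Fin n → Option (ZMod 2))
    (v : Fin n) (b : ZMod 2) :
    SatP φ ρ ⊆ SatP φ (Function.update ρ v (some b)) ∪ SatP φ (Function.update ρ v (some (b+1))) := by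
  rintro x ⟨hs, he⟩
  have hx := zsplit (x v) b
  rcases hx with h | h
  · left
    refine ⟨hs, fun w c hw => ?_⟩
    by_cases hwv : w = v
    · subst hwv; rw [Function.update_self] at hw; cases hw; exact h
    · exact he w c (by rwa [Function.update_of_ne hwv] at hw)
  · right
    refine ⟨hs, fun w c hw => ?_⟩
    by_cases hwv : w = v
    · subst hwv; rw [Function.update_self] at hw; cases hw; exact h
    · exact he w c (by rwa [Function.update_of_ne hwv] at hw)

lemma free_update {n : ℕ} (ρ : Fin n → Option (ZMod 2)) (v : Fin n) (b : ZMod 2) :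
    FreeS (Function.update ρ v (some b)) = (FreeS ρ).erase v := by
  ext w
  simp only [FreeS, Finset.mem_filter, Finset.mem_univ, true_and, Finset.mem_erase]
  by_cases hwv : w = v
  · subst hwv; simp [Function.update_self]
  · simp [Function.update_of_ne hwv, hwv]


lemma combine2 {n : ℕ} (s s1 s2 : Set (Fin n → ZMod 2)) (a1 a2 : ℝ)
    (ha1 : 0 ≤ a1) (ha2 : 0 ≤ a2)
    (hsub : s ⊆ s1 ∪ s2) (hs1 : s1 ⊆ s) (hs2 : s2 ⊆ s)
    (H1 : ∃ m : ℕ, s1.Nonempty → ((s1.ncard : ℝ) ≤ a1 * (16/15:ℝ)^m ∧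
      ∃ P, IsProjection m P ∧ P ⊆ s1))
    (H2 : ∃ m : ℕ, s2.Nonempty → ((s2.ncard : ℝ) ≤ a2 * (16/15:ℝ)^m ∧
      ∃ P, IsProjection m P ∧ P ⊆ s2)) :
    ∃ m : ℕ, s.Nonempty → ((s.ncard : ℝ) ≤ (a1 + a2) * (16/15:ℝ)^m ∧
      ∃ P, IsProjection m P ∧ P ⊆ s) := by
  obtain ⟨m1, H1⟩ := H1
  obtain ⟨m2, H2⟩ := H2
  have hcard : (s.ncard : ℝ) ≤ (s1.ncard : ℝ) + (s2.ncard : ℝ) := by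
    have h1 : s.ncard ≤ (s1 ∪ s2).ncard :=
      Set.ncard_le_ncard hsub (Set.toFinite _)
    have h2 : (s1 ∪ s2).ncard ≤ s1.ncard + s2.ncard := Set.ncard_union_le s1 s2
    exact_mod_cast le_trans h1 h2
  rcases s1.eq_empty_or_nonempty with e1 | ne1
  · rcases s2.eq_empty_or_nonempty with e2 | ne2
    · refine ⟨0, fun hs => absurd ?_ hs.ne_empty⟩
      rw [e1, e2] at hsub; simpa using Set.subset_empty_iff.mp (by simpa using hsub)
    · obtain ⟨hb, P, hP, hPs⟩ := H2 ne2
      refine ⟨m2, fun _ => ⟨?_, P, hP, hPs.trans hs2⟩⟩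
      have : (s1.ncard : ℝ) = 0 := by rw [e1]; simp
      nlinarith [pow_pos (by norm_num : (0:ℝ) < 16/15) m2]
  · rcases s2.eq_empty_or_nonempty with e2 | ne2
    · obtain ⟨hb, P, hP, hPs⟩ := H1 ne1
      refine ⟨m1, fun _ => ⟨?_, P, hP, hPs.trans hs1⟩⟩
      have : (s2.ncard : ℝ) = 0 := by rw [e2]; simp
      nlinarith [pow_pos (by norm_num : (0:ℝ) < 16/15) m1]
    · obtain ⟨hb1, P1, hP1, hPs1⟩ := H1 ne1
      obtain ⟨hb2, P2, hP2, hPs2⟩ := H2 ne2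
      have hμ : (1:ℝ) ≤ 16/15 := by norm_num
      have hm1 : (16/15:ℝ)^m1 ≤ (16/15:ℝ)^(max m1 m2) :=
        pow_le_pow_right₀ hμ (le_max_left _ _)
      have hm2 : (16/15:ℝ)^m2 ≤ (16/15:ℝ)^(max m1 m2) :=
        pow_le_pow_right₀ hμ (le_max_right _ _)
      refine ⟨max m1 m2, fun _ => ⟨?_, ?_⟩⟩
      · nlinarith
      · rcases le_total m1 m2 with h | h
        · rw [max_eq_right h]; exact ⟨P2, hP2, hPs2.trans hs2⟩
        · rw [max_eq_left h]; exact ⟨P1, hP1, hPs1.trans hs1⟩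

lemma ext_card {n : ℕ} (ρ : Fin n → Option (ZMod 2)) :
    (Ext ρ).ncard ≤ 2 ^ (FreeS ρ).card := by
  have hinj : Set.InjOn (fun (x : Fin n → ZMod 2) (v : ↥(FreeS ρ)) => x v.1) (Ext ρ) := by
    intro x hx y hy hxy
    simp only [Ext, Set.mem_setOf_eq] at hx hy
    funext w
    by_cases hw : ρ w = none
    · have hwF : w ∈ FreeS ρ := by simp [FreeS, hw]
      exact congrFun hxy ⟨w, hwF⟩
    · obtain ⟨b, hb⟩ := Option.ne_none_iff_exists'.mp hw
      rw [hx w b hb, hy w b hb]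
  have h := Set.ncard_le_ncard_of_injOn
    (fun (x : Fin n → ZMod 2) (v : ↥(FreeS ρ)) => x v.1)
    (fun a _ => Set.mem_univ _)
    hinj (Set.toFinite (Set.univ : Set (↥(FreeS ρ) → ZMod 2)))
  calc (Ext ρ).ncard ≤ (Set.univ : Set (↥(FreeS ρ) → ZMod 2)).ncard := h
    _ = Fintype.card (↥(FreeS ρ) → ZMod 2) := by
        rw [Set.ncard_univ, Nat.card_eq_fintype_card]
    _ = 2 ^ (FreeS ρ).card := by
        rw [Fintype.card_fun]
        simp [Fintype.card_coe]


lemma extProjection {n : ℕ} (ρ : Fin n → Option (ZMod 2)) :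
    ∃ P, IsProjection (FreeS ρ).card P ∧ P ⊆ Ext ρ := by
  set u := (FreeS ρ).card with hu
  let e := (FreeS ρ).orderIsoOfFin hu.symm
  let A : Fin (u+1) → Finset (Fin n) :=
    fun i => Fin.cases (Finset.univ.filter fun v => ρ v = some 0)
      (fun j => {(e j : Fin n)}) i
  let B : Fin (u+1) → Finset (Fin n) :=
    fun i => Fin.cases (Finset.univ.filter fun v => ρ v = some 1)
      (fun _ => (∅ : Finset (Fin n))) i
  have hA0 : A 0 = Finset.univ.filter (fun v => ρ v = some 0) := rfl
  have hB0 : B 0 = Finset.univ.filter (fun v => ρ v = some 1) := rfl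
  have hAs : ∀ j : Fin u, A j.succ = {(e j : Fin n)} := fun j => rfl
  have hBs : ∀ j : Fin u, B j.succ = ∅ := fun j => rfl
  have hfree : ∀ j : Fin u, ρ (e j : Fin n) = none := by
    intro j
    have h := (e j).2
    simp only [FreeS, Finset.mem_filter] at h
    exact h.2
  refine ⟨_, ⟨A, B, ?_, ?_, ?_, ?_, rfl⟩, ?_⟩
  · -- disjoint A i B i
    intro i
    induction i using Fin.cases with
    | zero =>
      rw [hA0, hB0, Finset.disjoint_left]
      intro a ha hb
      simp only [Finset.mem_filter] at ha hb
      rw [ha.2] at hb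
      exact absurd (Option.some_injective _ hb.2) (by decide)
    | succ j => rw [hBs]; exact Finset.disjoint_empty_right _
  · -- pairwise disjoint
    intro i j hij
    rw [Finset.disjoint_left]
    intro a hai haj
    induction i using Fin.cases with
    | zero =>
      induction j using Fin.cases with
      | zero => exact hij rfl
      | succ j' =>
        rw [hA0, hB0] at hai
        rw [hAs, hBs] at haj
        simp only [Finset.mem_union, Finset.mem_filter, Finset.mem_singleton,
          Finset.notMem_empty, or_false] at hai haj
        subst haj
        rcases hai with h | h <;> rw [hfree j'] at h <;> exact nomatch h.2
    | succ i' =>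
      induction j using Fin.cases with
      | zero =>
        rw [hA0, hB0] at haj
        rw [hAs, hBs] at hai
        simp only [Finset.mem_union, Finset.mem_filter, Finset.mem_singleton,
          Finset.notMem_empty, or_false] at hai haj
        subst hai
        rcases haj with h | h <;> rw [hfree i'] at h <;> exact nomatch h.2
      | succ j' =>
        rw [hAs, hBs] at hai haj
        simp only [Finset.mem_union, Finset.mem_singleton, Finset.notMem_empty,
          or_false] at hai haj
        apply hij
        have : e i' = e j' := Subtype.ext (hai ▸ haj ▸ rfl)
        rw [Fin.succ_inj.mpr (e.injective this)]
  · -- cover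
    apply Finset.eq_univ_of_forall
    intro v
    rw [Finset.mem_biUnion]
    cases hv : ρ v with
    | none =>
      have hvF : v ∈ FreeS ρ := by simp [FreeS, hv]
      refine ⟨(e.symm ⟨v, hvF⟩).succ, Finset.mem_univ _, ?_⟩
      rw [Finset.mem_union, hAs]
      left
      simp [e.apply_symm_apply]
    | some b =>
      refine ⟨0, Finset.mem_univ _, ?_⟩
      rw [Finset.mem_union, hA0, hB0]
      rcases z01 b with rfl | rfl
      · left; simp [hv]
      · right; simp [hv]
  · -- nonempty blocks
    intro i hi
    induction i using Fin.cases with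
    | zero => exact absurd rfl hi
    | succ j => rw [hAs, hBs]; simp
  · -- subset of Ext
    rintro x ⟨h0, h1, _⟩
    intro v b hvb
    rcases z01 b with rfl | rfl
    · exact h0 v (by rw [hA0]; simp [hvb])
    · exact h1 v (by rw [hB0]; simp [hvb])


lemma chain {n : ℕ} (φ : List (Finset (Fin n × ZMod 2))) :
    ∀ (L : List (Fin n × ZMod 2)) (ρ : Fin n → Option (ZMod 2)),
    (∀ l ∈ L, ρ l.1 = none) →
    (L.map Prod.fst).Nodup →
    (∀ x ∈ SatP φ ρ, ∃ l ∈ L, x l.1 = l.2) →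
    (∀ ρ' : Fin n → Option (ZMod 2), (FreeS ρ').card < (FreeS ρ).card →
      ∃ m : ℕ, (SatP φ ρ').Nonempty →
        (((SatP φ ρ').ncard : ℝ) ≤ (15/8:ℝ) ^ (FreeS ρ').card * (16/15:ℝ)^m ∧
         ∃ P, IsProjection m P ∧ P ⊆ SatP φ ρ')) →
    ∃ m : ℕ, (SatP φ ρ).Nonempty →
      (((SatP φ ρ).ncard : ℝ) ≤ K L.length * (15/8:ℝ) ^ (FreeS ρ).card * (16/15:ℝ)^m ∧
       ∃ P, IsProjection m P ∧ P ⊆ SatP φ ρ) := by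
  intro L
  induction L with
  | nil =>
    intro ρ _ _ hcover _
    refine ⟨0, fun hne => ?_⟩
    obtain ⟨x, hx⟩ := hne
    obtain ⟨l, hl, _⟩ := hcover x hx
    exact absurd hl List.not_mem_nil
  | cons l0 L' ih =>
    intro ρ hfree hnd hcover HI
    have hv : ρ l0.1 = none := hfree l0 List.mem_cons_self
    have hvF : l0.1 ∈ FreeS ρ := by simp [FreeS, hv]
    -- card of FreeS ρ is positive
    obtain ⟨u', hu'⟩ : ∃ u', (FreeS ρ).card = u' + 1 := by
      have := Finset.card_pos.mpr ⟨l0.1, hvF⟩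
      exact ⟨(FreeS ρ).card - 1, by omega⟩
    set ρ1 := Function.update ρ l0.1 (some l0.2) with hρ1
    set ρ2 := Function.update ρ l0.1 (some (l0.2 + 1)) with hρ2
    have hc1 : (FreeS ρ1).card = u' := by
      rw [hρ1, free_update, Finset.card_erase_of_mem hvF, hu']; omega
    have hc2 : (FreeS ρ2).card = u' := by
      rw [hρ2, free_update, Finset.card_erase_of_mem hvF, hu']; omega
    -- branch 1 via main IH
    have H1 : ∃ m : ℕ, (SatP φ ρ1).Nonempty →
        (((SatP φ ρ1).ncard : ℝ) ≤ (15/8:ℝ) ^ u' * (16/15:ℝ)^m ∧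
         ∃ P, IsProjection m P ∧ P ⊆ SatP φ ρ1) := by
      have := HI ρ1 (by rw [hc1, hu']; omega)
      rwa [hc1] at this
    -- branch 2 via chain induction
    have H2 : ∃ m : ℕ, (SatP φ ρ2).Nonempty →
        (((SatP φ ρ2).ncard : ℝ) ≤ K L'.length * (15/8:ℝ) ^ u' * (16/15:ℝ)^m ∧
         ∃ P, IsProjection m P ∧ P ⊆ SatP φ ρ2) := by
      have hfree' : ∀ l ∈ L', ρ2 l.1 = none := by
        intro l hl
        have hne : l.1 ≠ l0.1 := by
          intro h
          have : l0.1 ∈ L'.map Prod.fst := h ▸ List.mem_map_of_mem (f := Prod.fst) hl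
          exact (List.nodup_cons.mp hnd).1 this
        rw [hρ2, Function.update_of_ne hne]
        exact hfree l (List.mem_cons_of_mem _ hl)
      have hnd' : (L'.map Prod.fst).Nodup := by
        simpa [List.nodup_cons] using hnd.of_cons
      have hcover' : ∀ x ∈ SatP φ ρ2, ∃ l ∈ L', x l.1 = l.2 := by
        intro x hx
        have hxρ : x ∈ SatP φ ρ := sub_update φ ρ l0.1 hv (l0.2+1) hx
        obtain ⟨l, hl, hxl⟩ := hcover x hxρ
        rcases List.mem_cons.mp hl with rfl | hl'
        · exfalso
          have hx1 : x l.1 = l.2 + 1 := hx.2 l.1 (l.2+1) (by rw [hρ2, Function.update_self])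
          rw [hxl] at hx1
          exact zne l.2 hx1.symm
        · exact ⟨l, hl', hxl⟩
      have HI' : ∀ ρ' : Fin n → Option (ZMod 2), (FreeS ρ').card < (FreeS ρ2).card →
          ∃ m : ℕ, (SatP φ ρ').Nonempty →
            (((SatP φ ρ').ncard : ℝ) ≤ (15/8:ℝ) ^ (FreeS ρ').card * (16/15:ℝ)^m ∧
             ∃ P, IsProjection m P ∧ P ⊆ SatP φ ρ') := by
        intro ρ' hlt
        exact HI ρ' (by rw [hu']; rw [hc2] at hlt; omega)
      have := ih ρ2 hfree' hnd' hcover' HI'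
      rwa [hc2] at this
    have hcomb := combine2 (SatP φ ρ) (SatP φ ρ1) (SatP φ ρ2)
      ((15/8:ℝ) ^ u') (K L'.length * (15/8:ℝ) ^ u')
      (by positivity) (mul_nonneg (K_nonneg _) (by positivity))
      (split_update φ ρ l0.1 l0.2)
      (sub_update φ ρ l0.1 hv l0.2)
      (sub_update φ ρ l0.1 hv (l0.2+1))
      H1 H2
    obtain ⟨m, hm⟩ := hcomb
    refine ⟨m, fun hne => ?_⟩
    obtain ⟨hb, hP⟩ := hm hne
    refine ⟨?_, hP⟩
    have harith : ((15/8:ℝ) ^ u' + K L'.length * (15/8:ℝ) ^ u')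
        = K (L'.length + 1) * (15/8:ℝ) ^ (u'+1) := by
      rw [K_succ, pow_succ]
      ring
    calc ((SatP φ ρ).ncard : ℝ)
        ≤ ((15/8:ℝ) ^ u' + K L'.length * (15/8:ℝ) ^ u') * (16/15:ℝ)^m := hb
      _ = K (L'.length + 1) * (15/8:ℝ) ^ (u'+1) * (16/15:ℝ)^m := by rw [harith]
      _ = K (l0 :: L').length * (15/8:ℝ) ^ (FreeS ρ).card * (16/15:ℝ)^m := by
          rw [List.length_cons, hu']


lemma main {n : ℕ} (φ : List (Finset (Fin n × ZMod 2))) (hφ : IsKCnf 3 φ) :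
    ∀ (u : ℕ) (ρ : Fin n → Option (ZMod 2)), (FreeS ρ).card = u →
    ∃ m : ℕ, (SatP φ ρ).Nonempty →
      (((SatP φ ρ).ncard : ℝ) ≤ (15/8:ℝ) ^ u * (16/15:ℝ)^m ∧
       ∃ P, IsProjection m P ∧ P ⊆ SatP φ ρ) := by
  intro u
  induction u using Nat.strong_induction_on with
  | _ u IH =>
    intro ρ hu
    by_cases hA : ∀ C ∈ φ, (∃ l ∈ C, ρ l.1 = some l.2) ∨ (∃ v : Fin n, (v,0) ∈ C ∧ (v,1) ∈ C)
    · -- all clauses satisfied by every extension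
      have hEq : SatP φ ρ = Ext ρ := by
        apply Set.Subset.antisymm (Set.inter_subset_right)
        intro x hx
        refine ⟨fun C hC => ?_, hx⟩
        rcases hA C hC with ⟨l, hl, hρl⟩ | ⟨v, h0, h1⟩
        · exact ⟨l, hl, hx l.1 l.2 hρl⟩
        · rcases z01 (x v) with h | h
          · exact ⟨(v, 0), h0, h⟩
          · exact ⟨(v, 1), h1, h⟩
      obtain ⟨P, hP, hPE⟩ := extProjection ρ
      rw [hu] at hP
      refine ⟨u, fun _ => ⟨?_, P, hP, by rw [hEq]; exact hPE⟩⟩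
      have h1 : ((SatP φ ρ).ncard : ℝ) ≤ (2:ℝ) ^ u := by
        rw [hEq]
        have := ext_card ρ
        rw [hu] at this
        exact_mod_cast this
      calc ((SatP φ ρ).ncard : ℝ) ≤ (2:ℝ) ^ u := h1
        _ = (15/8:ℝ) ^ u * (16/15:ℝ)^u := by
            rw [← mul_pow]; norm_num
    · -- there is a useful clause
      push_neg at hA
      obtain ⟨C, hCφ, hC1, hC2⟩ := hA
      set FC := C.filter (fun l => ρ l.1 = none) with hFC
      have hfree : ∀ l ∈ FC.toList, ρ l.1 = none := by
        intro l hl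
        have := Finset.mem_toList.mp hl
        exact (Finset.mem_filter.mp this).2
      have hnd : (FC.toList.map Prod.fst).Nodup := by
        refine List.Nodup.map_on ?_ (Finset.nodup_toList FC)
        intro a ha b hb hab
        have haC : a ∈ C := Finset.filter_subset _ _ (Finset.mem_toList.mp ha)
        have hbC : b ∈ C := Finset.filter_subset _ _ (Finset.mem_toList.mp hb)
        by_contra hne
        have hsnd : a.2 ≠ b.2 := by
          intro h
          exact hne (Prod.ext hab h)
        rcases ztwo a.2 b.2 hsnd with ⟨h1, h2⟩ | ⟨h1, h2⟩
        · exact hC2 a.1 (by rw [← h1]; exact haC) (by rw [hab, ← h2]; exact hbC)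
        · exact hC2 a.1 (by rw [hab, ← h2]; exact hbC) (by rw [← h1]; exact haC)
      have hcover : ∀ x ∈ SatP φ ρ, ∃ l ∈ FC.toList, x l.1 = l.2 := by
        intro x hx
        obtain ⟨l, hl, hxl⟩ := hx.1 C hCφ
        cases hρl : ρ l.1 with
        | none => exact ⟨l, Finset.mem_toList.mpr (Finset.mem_filter.mpr ⟨hl, hρl⟩), hxl⟩
        | some c =>
          exfalso
          have := hx.2 l.1 c hρl
          rw [hxl] at this
          exact hC1 l hl (by rw [this]; exact hρl)
      have HI : ∀ ρ' : Fin n → Option (ZMod 2), (FreeS ρ').card < (FreeS ρ).card →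
          ∃ m : ℕ, (SatP φ ρ').Nonempty →
            (((SatP φ ρ').ncard : ℝ) ≤ (15/8:ℝ) ^ (FreeS ρ').card * (16/15:ℝ)^m ∧
             ∃ P, IsProjection m P ∧ P ⊆ SatP φ ρ') := by
        intro ρ' hlt
        exact IH (FreeS ρ').card (by omega) ρ' rfl
      obtain ⟨m, hm⟩ := chain φ FC.toList ρ hfree hnd hcover HI
      refine ⟨m, fun hne => ?_⟩
      obtain ⟨hb, hP⟩ := hm hne
      refine ⟨?_, hP⟩
      have hlen : FC.toList.length ≤ 3 := by
        rw [Finset.length_toList]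
        exact le_trans (Finset.card_filter_le C _) (hφ C hCφ)
      have hK : K FC.toList.length ≤ 1 := K_le_one _ hlen
      have hpos : (0:ℝ) < (15/8:ℝ) ^ (FreeS ρ).card * (16/15:ℝ)^m := by positivity
      calc ((SatP φ ρ).ncard : ℝ)
          ≤ K FC.toList.length * (15/8:ℝ) ^ (FreeS ρ).card * (16/15:ℝ)^m := hb
        _ ≤ 1 * ((15/8:ℝ) ^ (FreeS ρ).card * (16/15:ℝ)^m) := by
            rw [mul_assoc]
            exact mul_le_mul_of_nonneg_right hK (le_of_lt hpos)
        _ = (15/8:ℝ) ^ u * (16/15:ℝ)^m := by rw [one_mul, hu]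


end Stmt13

theorem stmt_13 :
    ∃ δ : ℝ, 0 < δ ∧
      ∀ (n : ℕ) (φ : List (Finset (Fin n × ZMod 2))), IsKCnf 3 φ →
        (7 : ℝ) ^ ((n : ℝ) / 3) ≤ ((SatAssignments φ).ncard : ℝ) →
        ∃ (m : ℕ) (P : Set (Fin n → ZMod 2)),
          IsProjection m P ∧ P ⊆ SatAssignments φ ∧ δ * n ≤ (m : ℝ) := by
  refine ⟨1/4, by norm_num, fun n φ hφ hcount => ?_⟩
  set ρ0 : Fin n → Option (ZMod 2) := fun _ => none with hρ0
  have hEq : Stmt13.SatP φ ρ0 = SatAssignments φ := by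
    apply Set.inter_eq_left.mpr
    intro x _ v b h
    exact absurd h (by simp [hρ0])
  have hcard0 : (Stmt13.FreeS ρ0).card = n := by
    simp [Stmt13.FreeS, hρ0]
  obtain ⟨m, hm⟩ := Stmt13.main φ hφ n ρ0 hcard0
  have hpos7 : (0:ℝ) < (7:ℝ) ^ ((n:ℝ)/3) := Real.rpow_pos_of_pos (by norm_num) _
  have hne : (SatAssignments φ).Nonempty := by
    apply Set.nonempty_of_ncard_ne_zero
    intro h0
    rw [h0] at hcount
    norm_num at hcount
    linarith
  rw [hEq] at hm
  obtain ⟨hb, P, hP, hPsub⟩ := hm hne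
  refine ⟨m, P, hP, hPsub, ?_⟩
  have h1 : (7:ℝ) ^ ((n:ℝ)/3) ≤ (15/8:ℝ)^n * (16/15:ℝ)^m := le_trans hcount hb
  have hnm : n ≤ 4*m := by
    by_contra hlt
    push_neg at hlt
    obtain ⟨n', rfl⟩ : ∃ n', n = n' + 1 := ⟨n-1, by omega⟩
    have h12m : 12*m ≤ 3*n' := by omega
    -- raise h1 to the 12th power
    have e1 : ((7:ℝ)^(((n'+1:ℕ):ℝ)/3))^(12:ℕ) = (7:ℝ)^(4*(n'+1)) := by
      rw [← Real.rpow_natCast ((7:ℝ)^(((n'+1:ℕ):ℝ)/3)) 12,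
        ← Real.rpow_mul (by norm_num : (0:ℝ) ≤ 7),
        ← Real.rpow_natCast (7:ℝ) (4*(n'+1))]
      congr 1
      push_cast
      ring
    have h12 : (7:ℝ)^(4*(n'+1)) ≤ (15/8:ℝ)^(12*(n'+1)) * (16/15:ℝ)^(12*m) := by
      have := pow_le_pow_left₀ (le_of_lt hpos7) h1 12
      rw [e1] at this
      calc (7:ℝ)^(4*(n'+1)) ≤ ((15/8:ℝ)^(n'+1) * (16/15:ℝ)^m)^(12:ℕ) := this
        _ = (15/8:ℝ)^(12*(n'+1)) * (16/15:ℝ)^(12*m) := by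
            rw [mul_pow, ← pow_mul, ← pow_mul, mul_comm (n'+1) 12, mul_comm m 12]
    have h2 : (16/15:ℝ)^(12*m) ≤ (16/15:ℝ)^(3*n') :=
      pow_le_pow_right₀ (by norm_num) h12m
    have h3 : (7:ℝ)^(4*(n'+1)) ≤ (15/8:ℝ)^(12*(n'+1)) * (16/15:ℝ)^(3*n') := by
      calc (7:ℝ)^(4*(n'+1)) ≤ (15/8:ℝ)^(12*(n'+1)) * (16/15:ℝ)^(12*m) := h12
        _ ≤ (15/8:ℝ)^(12*(n'+1)) * (16/15:ℝ)^(3*n') := by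
            exact mul_le_mul_of_nonneg_left h2 (by positivity)
    have h4 : (15/8:ℝ)^(12*(n'+1)) * (16/15:ℝ)^(3*n') < (7:ℝ)^(4*(n'+1)) := by
      calc (15/8:ℝ)^(12*(n'+1)) * (16/15:ℝ)^(3*n')
          = ((15/8:ℝ)^12)^(n'+1) * ((16/15:ℝ)^3)^n' := by
            rw [← pow_mul, ← pow_mul, mul_comm 12 (n'+1), mul_comm 3 n']
        _ = (15/8:ℝ)^12 * (((15/8:ℝ)^12 * (16/15:ℝ)^3)^n') := by
            rw [pow_succ, mul_pow]; ring
        _ ≤ (15/8:ℝ)^12 * ((2401:ℝ)^n') := by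
            apply mul_le_mul_of_nonneg_left _ (by positivity)
            apply pow_le_pow_left₀ (by positivity)
            norm_num
        _ < 2401 * (2401:ℝ)^n' := by
            apply mul_lt_mul_of_pos_right _ (by positivity)
            norm_num
        _ = ((7:ℝ)^4)^(n'+1) := by
            rw [pow_succ]
            norm_num
            ring
        _ = (7:ℝ)^(4*(n'+1)) := by rw [← pow_mul]
    linarith
  have : (n:ℝ) ≤ 4*(m:ℝ) := by exact_mod_cast hnm
  linarith
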